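/- Let r be a positive integer and define the projection P sending a sequence z̃ (defined on multi-indices of length ≤ 4r) to P(z̃) with P(z̃)_α = z̃_{2α} for all multi-indices α of length ≤ 2r. If z̃ is feasible for the level-2r Putinar moment relaxation (P-DGW-2r), then P(z̃) is feasible for the level-r Schmüdgen moment relaxation (S-DGW-r), and ∑_{i,k,j,l} L_{ij,kl} z̃_{2δ_{ij}+2δ_{kl}} = ∑_{i,k,j,l} L_{ij,kl} P(z̃)_{δ_{ij}+δ_{kl}}; consequently val(S-DGW-r) ≤ val(P-DGW-2r). -/

import Mathlib

open MvPolynomial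

/-- The Riesz functional associated to a moment sequence `z`. -/
noncomputable def riesz {σ : Type*} (z : (σ →₀ ℕ) → ℝ) (p : MvPolynomial σ ℝ) : ℝ :=
  ∑ α ∈ p.support, MvPolynomial.coeff α p * z α

/-- The total degree (length) of a multi-index. -/
def mdeg {σ : Type*} (α : σ →₀ ℕ) : ℕ := α.sum fun _ e => e

/-- Positive semidefiniteness of the truncated localizing matrix `M_t(g z)`:
the associated quadratic form is nonnegative on coefficient vectors of
polynomials of degree at most `t`. -/
def locPSD {σ : Type*} (z : (σ →₀ ℕ) → ℝ) (g : MvPolynomial σ ℝ) (t : ℕ) : Prop :=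
  ∀ p : MvPolynomial σ ℝ, p.totalDegree ≤ t → 0 ≤ riesz z (g * p ^ 2)

/-- Vanishing of the truncated localizing matrix `M_t(g z)`: all entries are zero. -/
def locZero {σ : Type*} (z : (σ →₀ ℕ) → ℝ) (g : MvPolynomial σ ℝ) (t : ℕ) : Prop :=
  ∀ α β : σ →₀ ℕ, mdeg α ≤ t → mdeg β ≤ t →
    riesz z (g * monomial α 1 * monomial β 1) = 0

/-- The row-marginal polynomial `r_i(π) = ∑_j π_{ij} - μ_i`. -/
noncomputable def rowPoly (a b : ℕ) (μ : Fin a → ℝ) (i : Fin a) :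
    MvPolynomial (Fin a × Fin b) ℝ :=
  (∑ j, X (i, j)) - C (μ i)

/-- The column-marginal polynomial `c_j(π) = ∑_i π_{ij} - ν_j`. -/
noncomputable def colPoly (a b : ℕ) (ν : Fin b → ℝ) (j : Fin b) :
    MvPolynomial (Fin a × Fin b) ℝ :=
  (∑ i, X (i, j)) - C (ν j)

/-- The monomial `e_I = ∏_{(i,j) ∈ I} π_{ij}`. -/
noncomputable def eI {a b : ℕ} (I : Finset (Fin a × Fin b)) : MvPolynomial (Fin a × Fin b) ℝ :=
  ∏ q ∈ I, X q

/-- A probability vector: nonnegative entries summing to 1. -/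
def IsProbVec {a : ℕ} (μ : Fin a → ℝ) : Prop := (∀ i, 0 ≤ μ i) ∧ ∑ i, μ i = 1

/-- Feasibility for the level-`r` Schmüdgen moment relaxation (S-DGW-r). -/
def SFeas (a b r : ℕ) (μ : Fin a → ℝ) (ν : Fin b → ℝ)
    (z : ((Fin a × Fin b) →₀ ℕ) → ℝ) : Prop :=
  z 0 = 1 ∧
  (∀ I : Finset (Fin a × Fin b), I.card ≤ 2 * r → locPSD z (eI I) (r - (I.card + 1) / 2)) ∧
  (∀ i, locZero z (rowPoly a b μ i) (r - 1)) ∧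
  (∀ j, locZero z (colPoly a b ν j) (r - 1)) ∧
  (∀ i₁ i₂ : Fin a, ∀ j : Fin b, locZero z (rowPoly a b μ i₁ * X (i₂, j)) (r - 1)) ∧
  (∀ j₁ j₂ : Fin b, ∀ i : Fin a, locZero z (colPoly a b ν j₁ * X (i, j₂)) (r - 1))

/-- The objective of the Schmüdgen moment relaxation. -/
noncomputable def objS (a b : ℕ) (L : Fin a → Fin b → Fin a → Fin b → ℝ)
    (z : ((Fin a × Fin b) →₀ ℕ) → ℝ) : ℝ :=
  ∑ i, ∑ j, ∑ k, ∑ l, L i j k l * z (Finsupp.single (i, j) 1 + Finsupp.single (k, l) 1)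

/-- The optimal value of the level-`r` Schmüdgen moment relaxation. -/
noncomputable def valS (a b r : ℕ) (μ : Fin a → ℝ) (ν : Fin b → ℝ)
    (L : Fin a → Fin b → Fin a → Fin b → ℝ) : ℝ :=
  sInf {v : ℝ | ∃ z, SFeas a b r μ ν z ∧ v = objS a b L z}

/-- Feasibility for the level-`s` Putinar moment relaxation (P-DGW-s), in squared variables. -/
def PFeas (a b s : ℕ) (μ : Fin a → ℝ) (ν : Fin b → ℝ)
    (z : ((Fin a × Fin b) →₀ ℕ) → ℝ) : Prop :=
  z 0 = 1 ∧ locPSD z 1 s ∧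
  (∀ i, locZero z (C (μ i) - ∑ j, X (i, j) ^ 2) (s - 1)) ∧
  (∀ j, locZero z (C (ν j) - ∑ i, X (i, j) ^ 2) (s - 1))

/-- The objective of the Putinar moment relaxation. -/
noncomputable def objP (a b : ℕ) (L : Fin a → Fin b → Fin a → Fin b → ℝ)
    (z : ((Fin a × Fin b) →₀ ℕ) → ℝ) : ℝ :=
  ∑ i, ∑ j, ∑ k, ∑ l, L i j k l * z (Finsupp.single (i, j) 2 + Finsupp.single (k, l) 2)

/-- The optimal value of the level-`s` Putinar moment relaxation. -/
noncomputable def valP (a b s : ℕ) (μ : Fin a → ℝ) (ν : Fin b → ℝ)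
    (L : Fin a → Fin b → Fin a → Fin b → ℝ) : ℝ :=
  sInf {v : ℝ | ∃ z, PFeas a b s μ ν z ∧ v = objP a b L z}

section RieszAux

variable {σ : Type*}

lemma riesz_def (z : (σ →₀ ℕ) → ℝ) (p : MvPolynomial σ ℝ) :
    riesz z p = Finsupp.sum (AddMonoidAlgebra.coeff p) fun α c => c * z α := rfl

lemma riesz_add (z : (σ →₀ ℕ) → ℝ) (p q : MvPolynomial σ ℝ) :
    riesz z (p + q) = riesz z p + riesz z q := by
  rw [riesz_def, riesz_def, riesz_def, AddMonoidAlgebra.coeff_add]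
  exact Finsupp.sum_add_index' (by simp) (by intros; ring)

lemma riesz_monomial (z : (σ →₀ ℕ) → ℝ) (α : σ →₀ ℕ) (c : ℝ) :
    riesz z (monomial α c) = c * z α := by
  classical
  by_cases hc : c = 0
  · simp [riesz, hc]
  · simp only [riesz, support_monomial, if_neg hc, Finset.sum_singleton]
    rw [coeff_monomial, if_pos rfl]

lemma riesz_neg (z : (σ →₀ ℕ) → ℝ) (p : MvPolynomial σ ℝ) :
    riesz z (-p) = - riesz z p := by
  have := riesz_add z p (-p)
  simp only [add_neg_cancel] at this
  have h0 : riesz z (0 : MvPolynomial σ ℝ) = 0 := by simp [riesz]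
  rw [h0] at this; linarith

lemma riesz_sub (z : (σ →₀ ℕ) → ℝ) (p q : MvPolynomial σ ℝ) :
    riesz z (p - q) = riesz z p - riesz z q := by
  rw [sub_eq_add_neg, riesz_add, riesz_neg]; ring

lemma riesz_sum {ι : Type*} (z : (σ →₀ ℕ) → ℝ) (s : Finset ι) (f : ι → MvPolynomial σ ℝ) :
    riesz z (∑ i ∈ s, f i) = ∑ i ∈ s, riesz z (f i) := by
  classical
  induction s using Finset.induction_on with
  | empty => simp [riesz]
  | insert _ _ h ih => rw [Finset.sum_insert h, riesz_add, ih, Finset.sum_insert h]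

lemma mdeg_add (α β : σ →₀ ℕ) : mdeg (α + β) = mdeg α + mdeg β := by
  unfold mdeg
  exact Finsupp.sum_add_index' (fun _ => rfl) (fun _ _ _ => rfl)

lemma mdeg_single (s : σ) (k : ℕ) : mdeg (Finsupp.single s k) = k :=
  Finsupp.sum_single_index rfl

lemma mdeg_zero : mdeg (0 : σ →₀ ℕ) = 0 := rfl

/-- The substitution `X s ↦ X s ^ 2`. -/
noncomputable def sqh (σ : Type*) : MvPolynomial σ ℝ →ₐ[ℝ] MvPolynomial σ ℝ :=
  MvPolynomial.aeval fun s => X s ^ 2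

lemma sqh_X (s : σ) : sqh σ (X s) = X s ^ 2 := aeval_X _ _

lemma sqh_C (c : ℝ) : sqh σ (C c) = C c := by
  rw [sqh, aeval_C, algebraMap_eq]

lemma sqh_monomial (α : σ →₀ ℕ) (c : ℝ) :
    sqh σ (monomial α c) = monomial (α + α) c := by
  rw [sqh, aeval_monomial, algebraMap_eq]
  have h1 : (α.prod fun nn e => ((X nn : MvPolynomial σ ℝ) ^ 2) ^ e)
      = (α.prod fun nn e => (X nn : MvPolynomial σ ℝ) ^ e) ^ 2 := by
    rw [Finsupp.prod, Finsupp.prod, ← Finset.prod_pow]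
    exact Finset.prod_congr rfl fun nn _ => by rw [← pow_mul, ← pow_mul, Nat.mul_comm]
  have h2 : (α.prod fun nn e => (X nn : MvPolynomial σ ℝ) ^ e) = monomial α 1 := by
    rw [monomial_eq, C_1, one_mul]
  rw [h1, h2, sq, monomial_mul, one_mul, C_mul_monomial, mul_one]

lemma riesz_sqh (zt : (σ →₀ ℕ) → ℝ) (p : MvPolynomial σ ℝ) :
    riesz (fun α => zt (α + α)) p = riesz zt (sqh σ p) := by
  induction p using MvPolynomial.induction_on' with
  | monomial α c => rw [riesz_monomial, sqh_monomial, riesz_monomial]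
  | add p q hp hq => rw [riesz_add, map_add, riesz_add, hp, hq]

lemma totalDegree_sqh_le (p : MvPolynomial σ ℝ) :
    (sqh σ p).totalDegree ≤ 2 * p.totalDegree := by
  conv_lhs => rw [p.as_sum, map_sum]
  refine le_trans (totalDegree_finset_sum _ _) (Finset.sup_le fun α hα => ?_)
  rw [sqh_monomial]
  refine le_trans (totalDegree_monomial_le _ _) ?_
  have : ((α + α).sum fun _ nn => id nn) = mdeg (α + α) := rfl
  rw [this, mdeg_add]
  have := MvPolynomial.le_totalDegree hα
  have hm : mdeg α ≤ p.totalDegree := this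
  omega

lemma X_eq_monomial (s : σ) : (X s : MvPolynomial σ ℝ) = monomial (Finsupp.single s 1) 1 := by
  rw [← X_pow_eq_monomial, pow_one]

end RieszAux
section Transfer

lemma sqh_eI {a b : ℕ} (I : Finset (Fin a × Fin b)) :
    sqh _ (eI I) = (eI I) ^ 2 := by
  rw [eI, map_prod, ← Finset.prod_pow]
  exact Finset.prod_congr rfl fun q _ => sqh_X q

lemma totalDegree_eI_le {a b : ℕ} (I : Finset (Fin a × Fin b)) :
    (eI I).totalDegree ≤ I.card := by
  refine le_trans (totalDegree_finset_prod _ _) ?_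
  simp [totalDegree_X]

lemma sqh_rowPoly (a b : ℕ) (μ : Fin a → ℝ) (i : Fin a) :
    sqh _ (rowPoly a b μ i) = -(C (μ i) - ∑ j, X (i, j) ^ 2) := by
  rw [rowPoly, map_sub, map_sum]
  simp only [sqh_X, sqh_C]
  ring

lemma sqh_colPoly (a b : ℕ) (ν : Fin b → ℝ) (j : Fin b) :
    sqh _ (colPoly a b ν j) = -(C (ν j) - ∑ i, X (i, j) ^ 2) := by
  rw [colPoly, map_sub, map_sum]
  simp only [sqh_X, sqh_C]
  ring

lemma monomial_single_two {a b : ℕ} (q : Fin a × Fin b) (γ : (Fin a × Fin b) →₀ ℕ) :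
    (monomial (Finsupp.single q 2) (1:ℝ)) * monomial γ 1
      = monomial (Finsupp.single q 1) 1 * monomial (Finsupp.single q 1 + γ) 1 := by
  rw [monomial_mul, monomial_mul, ← add_assoc, ← Finsupp.single_add]

lemma transfer {m n r : ℕ} (hr : 0 < r) (μ : Fin m → ℝ) (ν : Fin n → ℝ)
    (zt : ((Fin m × Fin n) →₀ ℕ) → ℝ) (hzt : PFeas m n (2 * r) μ ν zt) :
    SFeas m n r μ ν (fun α => zt (α + α)) := by
  obtain ⟨h0, hpsd, hrow, hcol⟩ := hzt
  refine ⟨by simpa using h0, ?_, ?_, ?_, ?_, ?_⟩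
  · -- PSD constraints
    intro I hI p hp
    rw [riesz_sqh, map_mul, sqh_eI, map_pow, ← mul_pow]
    have hdeg : (eI I * sqh _ p).totalDegree ≤ 2 * r := by
      refine le_trans (totalDegree_mul _ _) ?_
      have h1 := totalDegree_eI_le I
      have h2 := totalDegree_sqh_le p
      omega
    have := hpsd (eI I * sqh _ p) hdeg
    rwa [one_mul] at this
  · -- row constraints
    intro i α β hα hβ
    rw [riesz_sqh, map_mul, map_mul, sqh_monomial, sqh_monomial, sqh_rowPoly,
      neg_mul, neg_mul, riesz_neg]
    rw [hrow i (α + α) (β + β) (by rw [mdeg_add]; omega) (by rw [mdeg_add]; omega), neg_zero]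
  · -- column constraints
    intro j α β hα hβ
    rw [riesz_sqh, map_mul, map_mul, sqh_monomial, sqh_monomial, sqh_colPoly,
      neg_mul, neg_mul, riesz_neg]
    rw [hcol j (α + α) (β + β) (by rw [mdeg_add]; omega) (by rw [mdeg_add]; omega), neg_zero]
  · -- mixed row constraints
    intro i₁ i₂ j α β hα hβ
    rw [riesz_sqh]
    have key : sqh _ (rowPoly m n μ i₁ * X (i₂, j) * monomial α 1 * monomial β 1)
        = -((C (μ i₁) - ∑ j', X (i₁, j') ^ 2)
            * monomial (Finsupp.single (i₂, j) 1 + (α + α)) 1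
            * monomial (Finsupp.single (i₂, j) 1 + (β + β)) 1) := by
      rw [map_mul, map_mul, map_mul, sqh_monomial, sqh_monomial, sqh_X, sqh_rowPoly,
        X_pow_eq_monomial]
      have h3 : (monomial (Finsupp.single (i₂, j) 1 + (α + α)) (1:ℝ))
          = monomial (Finsupp.single (i₂, j) 1) 1 * monomial (α + α) 1 := by
        rw [monomial_mul, mul_one]
      have h4 : (monomial (Finsupp.single (i₂, j) 1 + (β + β)) (1:ℝ))
          = monomial (Finsupp.single (i₂, j) 1) 1 * monomial (β + β) 1 := by
        rw [monomial_mul, mul_one]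
      have h2 : (monomial (Finsupp.single (i₂, j) 2) (1:ℝ))
          = monomial (Finsupp.single (i₂, j) 1) 1 * monomial (Finsupp.single (i₂, j) 1) 1 := by
        rw [monomial_mul, ← Finsupp.single_add, mul_one]
      rw [h3, h4, h2]; ring
    rw [key, riesz_neg,
      hrow i₁ (Finsupp.single (i₂, j) 1 + (α + α)) (Finsupp.single (i₂, j) 1 + (β + β))
        (by rw [mdeg_add, mdeg_add, mdeg_single]; omega)
        (by rw [mdeg_add, mdeg_add, mdeg_single]; omega), neg_zero]
  · -- mixed column constraints
    intro j₁ j₂ i α β hα hβ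
    rw [riesz_sqh]
    have key : sqh _ (colPoly m n ν j₁ * X (i, j₂) * monomial α 1 * monomial β 1)
        = -((C (ν j₁) - ∑ i', X (i', j₁) ^ 2)
            * monomial (Finsupp.single (i, j₂) 1 + (α + α)) 1
            * monomial (Finsupp.single (i, j₂) 1 + (β + β)) 1) := by
      rw [map_mul, map_mul, map_mul, sqh_monomial, sqh_monomial, sqh_X, sqh_colPoly,
        X_pow_eq_monomial]
      have h3 : (monomial (Finsupp.single (i, j₂) 1 + (α + α)) (1:ℝ))
          = monomial (Finsupp.single (i, j₂) 1) 1 * monomial (α + α) 1 := by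
        rw [monomial_mul, mul_one]
      have h4 : (monomial (Finsupp.single (i, j₂) 1 + (β + β)) (1:ℝ))
          = monomial (Finsupp.single (i, j₂) 1) 1 * monomial (β + β) 1 := by
        rw [monomial_mul, mul_one]
      have h2 : (monomial (Finsupp.single (i, j₂) 2) (1:ℝ))
          = monomial (Finsupp.single (i, j₂) 1) 1 * monomial (Finsupp.single (i, j₂) 1) 1 := by
        rw [monomial_mul, ← Finsupp.single_add, mul_one]
      rw [h3, h4, h2]; ring
    rw [key, riesz_neg,
      hcol j₁ (Finsupp.single (i, j₂) 1 + (α + α)) (Finsupp.single (i, j₂) 1 + (β + β))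
        (by rw [mdeg_add, mdeg_add, mdeg_single]; omega)
        (by rw [mdeg_add, mdeg_add, mdeg_single]; omega), neg_zero]

end Transfer
section Bound

lemma objS_lb {m n r : ℕ} {μ : Fin m → ℝ} {ν : Fin n → ℝ} (hr : 0 < r)
    (hμ : IsProbVec μ) (hν : IsProbVec ν)
    (L : Fin m → Fin n → Fin m → Fin n → ℝ) (z : ((Fin m × Fin n) →₀ ℕ) → ℝ)
    (hz : SFeas m n r μ ν z) :
    -(∑ i, ∑ j, ∑ k, ∑ l, |L i j k l|) ≤ objS m n L z := by
  obtain ⟨h0, hpsd, hrow, hcol, hrowx, hcolx⟩ := hz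
  have hs1 : ∀ p : Fin m × Fin n, 0 ≤ z (Finsupp.single p 1) := by
    intro p
    have h := hpsd {p} (by simp; omega) 1 (by simp)
    rwa [eI, Finset.prod_singleton, one_pow, mul_one, X_eq_monomial, riesz_monomial,
      one_mul] at h
  have hs2 : ∀ p q : Fin m × Fin n, 0 ≤ z (Finsupp.single p 1 + Finsupp.single q 1) := by
    intro p q
    by_cases hpq : p = q
    · subst hpq
      have h := hpsd ∅ (by simp) (monomial (Finsupp.single p 1) 1)
        (by refine le_trans (totalDegree_monomial_le _ _) ?_
            have h1 : ((Finsupp.single p 1).sum fun _ nn => id nn) = 1 := mdeg_single p 1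
            rw [h1]; simp only [Finset.card_empty]; omega)
      rwa [eI, Finset.prod_empty, one_mul, sq, monomial_mul, mul_one, riesz_monomial,
        one_mul] at h
    · have hcard : ({p, q} : Finset (Fin m × Fin n)).card = 2 := Finset.card_pair hpq
      have h := hpsd {p, q} (by omega) 1 (by simp)
      rwa [eI, Finset.prod_pair hpq, one_pow, mul_one, X_eq_monomial, X_eq_monomial,
        monomial_mul, mul_one, riesz_monomial, one_mul] at h
  have hrowsum : ∀ (i : Fin m) (p : Fin m × Fin n),
      ∑ j, z (Finsupp.single (i, j) 1 + Finsupp.single p 1) = μ i * z (Finsupp.single p 1) := by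
    intro i p
    have h := hrowx i p.1 p.2 0 0 (by simp [mdeg_zero]) (by simp [mdeg_zero])
    rw [monomial_zero', C_1, mul_one, mul_one, Prod.mk.eta] at h
    rw [rowPoly, sub_mul, Finset.sum_mul, riesz_sub, riesz_sum] at h
    have e1 : ∀ j : Fin n, (X (i, j) : MvPolynomial (Fin m × Fin n) ℝ) * X p
        = monomial (Finsupp.single (i, j) 1 + Finsupp.single p 1) 1 := by
      intro j; rw [X_eq_monomial, X_eq_monomial, monomial_mul, mul_one]
    have e2 : (C (μ i) : MvPolynomial (Fin m × Fin n) ℝ) * X p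
        = monomial (Finsupp.single p 1) (μ i) := by
      rw [X_eq_monomial, C_mul_monomial, mul_one]
    simp only [e1, e2, riesz_monomial, one_mul] at h
    linarith
  have hcolsum : ∀ l : Fin n, ∑ i, z (Finsupp.single (i, l) 1) = ν l := by
    intro l
    have h := hcol l 0 0 (by simp [mdeg_zero]) (by simp [mdeg_zero])
    rw [monomial_zero', C_1, mul_one, mul_one] at h
    rw [colPoly, riesz_sub, riesz_sum] at h
    have e2 : (C (ν l) : MvPolynomial (Fin m × Fin n) ℝ) = monomial 0 (ν l) :=
      by rw [monomial_zero']
    simp only [X_eq_monomial, e2, riesz_monomial, one_mul, h0, mul_one] at h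
    linarith
  have hub : ∀ (i : Fin m) (j : Fin n) (k : Fin m) (l : Fin n),
      z (Finsupp.single (i, j) 1 + Finsupp.single (k, l) 1) ≤ 1 := by
    intro i j k l
    have h1 : z (Finsupp.single (i, j) 1 + Finsupp.single (k, l) 1)
        ≤ μ i * z (Finsupp.single (k, l) 1) := by
      rw [← hrowsum i (k, l)]
      exact Finset.single_le_sum (fun j' _ => hs2 (i, j') (k, l)) (Finset.mem_univ j)
    have h2 : z (Finsupp.single (k, l) 1) ≤ ν l := by
      rw [← hcolsum l]
      exact Finset.single_le_sum (fun i' _ => hs1 (i', l)) (Finset.mem_univ k)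
    have h3 : μ i ≤ 1 := by
      rw [← hμ.2]; exact Finset.single_le_sum (fun i' _ => hμ.1 i') (Finset.mem_univ i)
    have h4 : ν l ≤ 1 := by
      rw [← hν.2]; exact Finset.single_le_sum (fun l' _ => hν.1 l') (Finset.mem_univ l)
    nlinarith [hs1 (k, l), hμ.1 i, hν.1 l]
  have hterm : ∀ (i : Fin m) (j : Fin n) (k : Fin m) (l : Fin n),
      -|L i j k l| ≤ L i j k l * z (Finsupp.single (i, j) 1 + Finsupp.single (k, l) 1) := by
    intro i j k l
    rcases le_or_gt 0 (L i j k l) with hL | hL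
    · have hp := mul_nonneg hL (hs2 (i, j) (k, l))
      have ha := abs_nonneg (L i j k l)
      linarith
    · rw [abs_of_neg hL]
      nlinarith [hub i j k l, hs2 (i, j) (k, l)]
  have hneg : -(∑ i, ∑ j, ∑ k, ∑ l, |L i j k l|)
      = ∑ i, ∑ j, ∑ k, ∑ l, -|L i j k l| := by
    simp [Finset.sum_neg_distrib]
  rw [hneg]
  unfold objS
  exact Finset.sum_le_sum fun i _ => Finset.sum_le_sum fun j _ =>
    Finset.sum_le_sum fun k _ => Finset.sum_le_sum fun l _ => hterm i j k l

end Bound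
/-- The projection `P(z̃)_α = z̃_{2α}` maps feasible points of (P-DGW-2r)
to feasible points of (S-DGW-r), preserving the objective value; consequently
val(S-DGW-r) ≤ val(P-DGW-2r). -/
theorem stmt1 (m n r : ℕ) (hm : 0 < m) (hn : 0 < n) (hr : 0 < r)
    (μ : Fin m → ℝ) (ν : Fin n → ℝ) (hμ : IsProbVec μ) (hν : IsProbVec ν)
    (L : Fin m → Fin n → Fin m → Fin n → ℝ)
    (zt : ((Fin m × Fin n) →₀ ℕ) → ℝ) (hzt : PFeas m n (2 * r) μ ν zt) :
    SFeas m n r μ ν (fun α => zt (α + α)) ∧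
    objP m n L zt = objS m n L (fun α => zt (α + α)) ∧
    valS m n r μ ν L ≤ valP m n (2 * r) μ ν L := by
  have hobj : ∀ z' : ((Fin m × Fin n) →₀ ℕ) → ℝ,
      objP m n L z' = objS m n L (fun α => z' (α + α)) := by
    intro z'
    unfold objP objS
    refine Finset.sum_congr rfl fun i _ => Finset.sum_congr rfl fun j _ =>
      Finset.sum_congr rfl fun k _ => Finset.sum_congr rfl fun l _ => ?_
    congr 1
    show z' (Finsupp.single (i, j) 2 + Finsupp.single (k, l) 2)
      = z' ((Finsupp.single (i, j) 1 + Finsupp.single (k, l) 1)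
          + (Finsupp.single (i, j) 1 + Finsupp.single (k, l) 1))
    congr 1
    rw [show (2 : ℕ) = 1 + 1 from rfl, Finsupp.single_add, Finsupp.single_add]
    abel
  refine ⟨transfer hr μ ν zt hzt, hobj zt, ?_⟩
  have hBdd : BddBelow {v : ℝ | ∃ z, SFeas m n r μ ν z ∧ v = objS m n L z} := by
    refine ⟨-(∑ i, ∑ j, ∑ k, ∑ l, |L i j k l|), ?_⟩
    rintro v ⟨z, hz, rfl⟩
    exact objS_lb hr hμ hν L z hz
  unfold valS valP
  refine le_csInf ⟨objP m n L zt, zt, hzt, rfl⟩ ?_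
  rintro v ⟨z', hz', rfl⟩
  have h1 : objS m n L (fun α => z' (α + α))
      ∈ {v : ℝ | ∃ z, SFeas m n r μ ν z ∧ v = objS m n L z} :=
    ⟨_, transfer hr μ ν z' hz', rfl⟩
  calc sInf {v : ℝ | ∃ z, SFeas m n r μ ν z ∧ v = objS m n L z}
      ≤ objS m n L (fun α => z' (α + α)) := csInf_le hBdd h1
    _ = objP m n L z' := (hobj z').symm
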